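/- Every invariant f ∈ A_n = ker D_n, when the variables x_0, ..., x_{⌊n/2⌋} are set to zero and x_{⌊n/2⌋+1}, ..., x_n are renamed to x_0, ..., x_{n−⌊n/2⌋−1}, becomes a constant; that is, π_{n−⌊n/2⌋−1, n}(A_n) = K. -/

import Mathlib

open MvPolynomial Finset

noncomputable def Dw (K : Type) [CommRing K] (n : ℕ) :
    Derivation K (MvPolynomial (Fin (n + 1)) K) (MvPolynomial (Fin (n + 1)) K) :=
  MvPolynomial.mkDerivation K fun i =>
    if i.1 = 0 then 0 else
      MvPolynomial.X ⟨i.1 - 1, Nat.lt_of_le_of_lt (Nat.sub_le _ _) i.isLt⟩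

noncomputable def Ew (K : Type) [CommRing K] (n : ℕ) :
    Derivation K (MvPolynomial (Fin (n + 1)) K) (MvPolynomial (Fin (n + 1)) K) :=
  MvPolynomial.mkDerivation K fun i =>
    if h : i.1 < n then (((i.1 + 1) * (n - i.1) : ℕ) : K) • MvPolynomial.X ⟨i.1 + 1, Nat.succ_lt_succ h⟩
    else 0

noncomputable def Hw (K : Type) [CommRing K] (n : ℕ) :
    Derivation K (MvPolynomial (Fin (n + 1)) K) (MvPolynomial (Fin (n + 1)) K) :=
  MvPolynomial.mkDerivation K fun i =>
    (((n : ℤ) - 2 * i.1 : ℤ) : K) • MvPolynomial.X i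

open Fin.NatCast in
noncomputable def piHom (K : Type) [CommRing K] (m n : ℕ) :
    MvPolynomial (Fin (n + 1)) K →ₐ[K] MvPolynomial (Fin (m + 1)) K :=
  MvPolynomial.aeval fun i : Fin (n + 1) =>
    if i.1 < n - m then 0 else MvPolynomial.X ((i.1 - (n - m) : ℕ) : Fin (m + 1))

def ww (n : ℕ) : Fin (n + 1) → ℤ × ℤ := fun i => (1, (i.1 : ℤ))

section
variable (K : Type) [Field K] [CharZero K] (n : ℕ)

lemma Dw_X (i : Fin (n + 1)) : Dw K n (X i) =
    (if i.1 = 0 then 0 else X ⟨i.1 - 1, Nat.lt_of_le_of_lt (Nat.sub_le _ _) i.isLt⟩) :=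
  mkDerivation_X _ _ _

lemma Ew_X (i : Fin (n + 1)) : Ew K n (X i) =
    (if h : i.1 < n then (((i.1 + 1) * (n - i.1) : ℕ) : K) • X ⟨i.1 + 1, Nat.succ_lt_succ h⟩
     else 0) :=
  mkDerivation_X _ _ _

lemma Hw_X (i : Fin (n + 1)) : Hw K n (X i) = (((n : ℤ) - 2 * i.1 : ℤ) : K) • X i :=
  mkDerivation_X _ _ _

lemma DE_bracket : ⁅Dw K n, Ew K n⁆ = Hw K n := by
  apply derivation_ext
  intro i
  rw [Derivation.commutator_apply, Dw_X, Ew_X, Hw_X]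
  by_cases h0 : i.1 = 0
  · rw [if_pos h0]
    by_cases hn : i.1 < n
    · rw [dif_pos hn, Derivation.map_smul, map_zero, sub_zero, Dw_X,
        if_neg (by omega : ¬ (i.1 + 1 = 0))]
      have e1 : (⟨i.1 + 1 - 1, by omega⟩ : Fin (n + 1)) = i := by
        apply Fin.ext; simp
      rw [e1]
      congr 1
      have : (n - i.1 : ℕ) = n := by omega
      rw [this, h0]
      push_cast [h0]
      ring
    · -- i = 0 and ¬ 0 < n so n = 0
      have hn0 : n = 0 := by omega
      rw [dif_neg hn, map_zero, map_zero, sub_zero]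
      have : ((n : ℤ) - 2 * i.1 : ℤ) = 0 := by rw [h0, hn0]; ring
      rw [this]
      simp
  · rw [if_neg h0]
    by_cases hn : i.1 < n
    · rw [dif_pos hn, Derivation.map_smul, Dw_X, Ew_X, if_neg (by omega : ¬ (i.1 + 1 = 0)),
        dif_pos (by omega : i.1 - 1 < n)]
      have e1 : (⟨i.1 + 1 - 1, by omega⟩ : Fin (n + 1)) = i := by apply Fin.ext; simp
      have e2 : (⟨i.1 - 1 + 1, by omega⟩ : Fin (n + 1)) = i := by apply Fin.ext; simp; omega
      rw [e1, e2, ← sub_smul]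
      congr 1
      have h1 : (((i.1 + 1) * (n - i.1) : ℕ) : K) = ((i.1 : K) + 1) * ((n : K) - i.1) := by
        push_cast [Nat.cast_sub (by omega : i.1 ≤ n)]; ring
      have h2 : (((i.1 - 1 + 1) * (n - (i.1 - 1)) : ℕ) : K)
          = (i.1 : K) * ((n : K) - i.1 + 1) := by
        push_cast [Nat.cast_sub (by omega : i.1 - 1 ≤ n), Nat.cast_sub (by omega : 1 ≤ i.1)]
        ring
      rw [h1, h2]
      push_cast
      ring
    · have hi : i.1 = n := by omega
      rw [dif_neg hn, map_zero, zero_sub, Ew_X, dif_pos (by omega : i.1 - 1 < n)]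
      have e2 : (⟨i.1 - 1 + 1, by omega⟩ : Fin (n + 1)) = i := by apply Fin.ext; simp; omega
      rw [e2, ← neg_smul]
      congr 1
      have h2 : (((i.1 - 1 + 1) * (n - (i.1 - 1)) : ℕ) : K)
          = (i.1 : K) * ((n : K) - i.1 + 1) := by
        push_cast [Nat.cast_sub (by omega : i.1 - 1 ≤ n), Nat.cast_sub (by omega : 1 ≤ i.1)]
        ring
      rw [h2, hi]
      push_cast
      ring

lemma weight_single_one (i : Fin (n + 1)) :
    Finsupp.weight (ww n) (Finsupp.single i 1) = ww n i := by
  rw [Finsupp.weight_apply, Finsupp.sum_single_index (by simp), one_smul]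

lemma weight_fst (u : Fin (n + 1) →₀ ℕ) :
    (Finsupp.weight (ww n) u).1 = ∑ i ∈ u.support, (u i : ℤ) := by
  rw [Finsupp.weight_apply, Finsupp.sum, Prod.fst_sum]
  refine Finset.sum_congr rfl fun i _ => ?_
  simp [ww, nsmul_eq_mul]

lemma weight_snd (u : Fin (n + 1) →₀ ℕ) :
    (Finsupp.weight (ww n) u).2 = ∑ i ∈ u.support, (u i : ℤ) * (i.1 : ℤ) := by
  rw [Finsupp.weight_apply, Finsupp.sum, Prod.snd_sum]
  refine Finset.sum_congr rfl fun i _ => ?_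
  simp [ww, nsmul_eq_mul]

lemma weight_sub_single {u : Fin (n + 1) →₀ ℕ} {i : Fin (n + 1)} (hi : i ∈ u.support) :
    Finsupp.weight (ww n) (u - Finsupp.single i 1)
      = Finsupp.weight (ww n) u - ww n i := by
  have hle : Finsupp.single i 1 ≤ u := by
    rw [Finsupp.single_le_iff]
    exact Nat.one_le_iff_ne_zero.mpr (Finsupp.mem_support_iff.mp hi)
  have : (u - Finsupp.single i 1) + Finsupp.single i 1 = u := tsub_add_cancel_of_le hle
  have h2 := congrArg (Finsupp.weight (ww n)) this
  rw [map_add, weight_single_one] at h2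
  exact eq_sub_of_add_eq h2

lemma mkDeriv_homog (g : Fin (n + 1) → MvPolynomial (Fin (n + 1)) K) (δ : ℤ × ℤ)
    (hg : ∀ i, IsWeightedHomogeneous (ww n) (g i) (ww n i + δ))
    {f : MvPolynomial (Fin (n + 1)) K} {m : ℤ × ℤ}
    (hf : IsWeightedHomogeneous (ww n) f m) :
    IsWeightedHomogeneous (ww n) (mkDerivation K g f) (m + δ) := by
  rw [← mem_weightedHomogeneousSubmodule]
  have hrw : (mkDerivation K g) f
      = ∑ u ∈ f.support, (mkDerivation K g) (monomial u (coeff u f)) := by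
    rw [← map_sum, support_sum_monomial_coeff]
  rw [hrw]
  refine Submodule.sum_mem _ fun u hu => ?_
  rw [mkDerivation_monomial]
  refine Submodule.smul_mem _ _ ?_
  rw [Finsupp.sum]
  refine Submodule.sum_mem _ fun i hi => ?_
  rw [mem_weightedHomogeneousSubmodule]
  have hwu : Finsupp.weight (ww n) u = m := hf (MvPolynomial.mem_support_iff.mp hu)
  have hws : Finsupp.weight (ww n) (u - Finsupp.single i 1) = m - ww n i := by
    rw [weight_sub_single n hi, hwu]
  have hmono : IsWeightedHomogeneous (ww n)
      (monomial (u - Finsupp.single i 1) ((u i : K))) (m - ww n i) :=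
    isWeightedHomogeneous_monomial _ _ _ hws
  rw [smul_eq_mul]
  have e : m - ww n i + (ww n i + δ) = m + δ := by abel
  rw [← e]
  exact hmono.mul (hg i)

lemma Dw_homog {f : MvPolynomial (Fin (n + 1)) K} {m : ℤ × ℤ}
    (hf : IsWeightedHomogeneous (ww n) f m) :
    IsWeightedHomogeneous (ww n) (Dw K n f) (m + (0, -1)) := by
  refine mkDeriv_homog K n _ _ (fun i => ?_) hf
  by_cases h0 : i.1 = 0
  · rw [if_pos h0]
    exact isWeightedHomogeneous_zero _ _ _
  · rw [if_neg h0]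
    have e : ww n ⟨i.1 - 1, Nat.lt_of_le_of_lt (Nat.sub_le _ _) i.isLt⟩ = ww n i + (0, -1) := by
      simp only [ww, Prod.mk_add_mk, Prod.mk.injEq]
      constructor
      · ring
      · push_cast [Nat.cast_sub (by omega : 1 ≤ i.1)]
        ring
    rw [← e]
    exact isWeightedHomogeneous_X _ _ _

lemma Ew_homog {f : MvPolynomial (Fin (n + 1)) K} {m : ℤ × ℤ}
    (hf : IsWeightedHomogeneous (ww n) f m) :
    IsWeightedHomogeneous (ww n) (Ew K n f) (m + (0, 1)) := by
  refine mkDeriv_homog K n _ _ (fun i => ?_) hf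
  by_cases h : i.1 < n
  · rw [dif_pos h, ← mem_weightedHomogeneousSubmodule]
    refine Submodule.smul_mem _ _ ?_
    rw [mem_weightedHomogeneousSubmodule]
    have e : ww n ⟨i.1 + 1, Nat.succ_lt_succ h⟩ = ww n i + (0, 1) := by
      simp only [ww, Prod.mk_add_mk, Prod.mk.injEq]
      constructor
      · ring
      · push_cast; ring
    rw [← e]
    exact isWeightedHomogeneous_X _ _ _
  · rw [dif_neg h]
    exact isWeightedHomogeneous_zero _ _ _

lemma Hw_eigen {f : MvPolynomial (Fin (n + 1)) K} {d v : ℤ}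
    (hf : IsWeightedHomogeneous (ww n) f (d, v)) :
    Hw K n f = (((n : ℤ) * d - 2 * v : ℤ) : K) • f := by
  have hrw : (Hw K n) f = ∑ u ∈ f.support, (Hw K n) (monomial u (coeff u f)) := by
    rw [← map_sum]
    exact congrArg _ (support_sum_monomial_coeff f).symm
  rw [hrw]
  conv_rhs => rw [← support_sum_monomial_coeff f]
  rw [Finset.smul_sum]
  refine Finset.sum_congr rfl fun u hu => ?_
  have hwu : Finsupp.weight (ww n) u = (d, v) := hf (MvPolynomial.mem_support_iff.mp hu)
  rw [Hw, mkDerivation_monomial, Finsupp.sum]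
  have hterm : ∀ i ∈ u.support,
      monomial (u - Finsupp.single i 1) ((u i : K)) • ((((n : ℤ) - 2 * i.1 : ℤ) : K) • X i)
        = ((((u i : ℤ) * ((n : ℤ) - 2 * i.1) : ℤ) : K)) • monomial u (1 : K) := by
    intro i hi
    have hle : Finsupp.single i 1 ≤ u := by
      rw [Finsupp.single_le_iff]
      exact Nat.one_le_iff_ne_zero.mpr (Finsupp.mem_support_iff.mp hi)
    rw [smul_comm, smul_eq_mul]
    have hX : (X i : MvPolynomial (Fin (n + 1)) K) = monomial (Finsupp.single i 1) 1 := rfl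
    rw [hX, monomial_mul, tsub_add_cancel_of_le hle, mul_one, smul_monomial, smul_monomial]
    congr 1
    simp only [smul_eq_mul]
    push_cast
    ring
  rw [Finset.sum_congr rfl hterm, ← Finset.sum_smul]
  have hcast : (∑ i ∈ u.support, ((((u i : ℤ) * ((n : ℤ) - 2 * i.1) : ℤ) : K)))
      = (((∑ i ∈ u.support, ((u i : ℤ) * ((n : ℤ) - 2 * i.1) : ℤ)) : ℤ) : K) := by
    push_cast
    rfl
  have hS : (∑ i ∈ u.support, ((u i : ℤ) * ((n : ℤ) - 2 * i.1) : ℤ)) = (n : ℤ) * d - 2 * v := by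
    have h1 : (∑ i ∈ u.support, (u i : ℤ)) = d := by
      rw [← weight_fst n u, hwu]
    have h2 : (∑ i ∈ u.support, (u i : ℤ) * (i.1 : ℤ)) = v := by
      rw [← weight_snd n u, hwu]
    calc (∑ i ∈ u.support, ((u i : ℤ) * ((n : ℤ) - 2 * i.1) : ℤ))
        = ∑ i ∈ u.support, ((n : ℤ) * (u i : ℤ) - 2 * ((u i : ℤ) * (i.1 : ℤ))) := by
          refine Finset.sum_congr rfl fun i _ => by ring
      _ = (n : ℤ) * (∑ i ∈ u.support, (u i : ℤ))
            - 2 * (∑ i ∈ u.support, (u i : ℤ) * (i.1 : ℤ)) := by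
          rw [Finset.sum_sub_distrib, Finset.mul_sum, Finset.mul_sum]
      _ = (n : ℤ) * d - 2 * v := by rw [h1, h2]
  rw [hcast, hS, smul_comm]
  congr 1
  rw [smul_monomial, smul_eq_mul, mul_one]

lemma homog_zero {f : MvPolynomial (Fin (n + 1)) K} {d v : ℤ}
    (hf : IsWeightedHomogeneous (ww n) f (d, v)) (h : (n : ℤ) * d < v) : f = 0 := by
  by_contra hne
  obtain ⟨u, hu⟩ := MvPolynomial.ne_zero_iff.mp hne
  have hwu : Finsupp.weight (ww n) u = (d, v) := hf hu
  have h1 : (∑ i ∈ u.support, (u i : ℤ)) = d := by rw [← weight_fst n u, hwu]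
  have h2 : (∑ i ∈ u.support, (u i : ℤ) * (i.1 : ℤ)) = v := by rw [← weight_snd n u, hwu]
  have hle : v ≤ (n : ℤ) * d := by
    rw [← h1, ← h2, Finset.mul_sum]
    refine Finset.sum_le_sum fun i _ => ?_
    have : (i.1 : ℤ) ≤ (n : ℤ) := by exact_mod_cast Nat.lt_succ_iff.mp i.isLt
    calc (u i : ℤ) * (i.1 : ℤ) ≤ (u i : ℤ) * (n : ℤ) :=
          mul_le_mul_of_nonneg_left this (by positivity)
      _ = (n : ℤ) * (u i : ℤ) := mul_comm _ _
  omega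

lemma comp_ker {f : MvPolynomial (Fin (n + 1)) K} (hf : Dw K n f = 0) (m : ℤ × ℤ) :
    Dw K n (weightedHomogeneousComponent (ww n) m f) = 0 := by
  classical
  set T : Finset (ℤ × ℤ) :=
    (weightedHomogeneousComponent_finsupp (w := ww n) f).toFinset ∪ {m} with hT
  have hsum : ∑ m' ∈ T, weightedHomogeneousComponent (ww n) m' f = f := by
    rw [← finsum_eq_sum_of_support_subset _ (by
      intro x hx
      simp only [hT, Finset.coe_union, Finset.coe_singleton, Set.mem_union]
      left
      exact (weightedHomogeneousComponent_finsupp (w := ww n) f).mem_toFinset.mpr hx)]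
    exact sum_weightedHomogeneousComponent (ww n) f
  have h0 : ∑ m' ∈ T, Dw K n (weightedHomogeneousComponent (ww n) m' f) = 0 := by
    rw [← map_sum, hsum, hf]
  have h1 := congrArg (weightedHomogeneousComponent (ww n) (m + (0, -1))) h0
  rw [map_sum, map_zero] at h1
  rw [Finset.sum_eq_single_of_mem m (by simp [hT])
    (fun m' _ hm' => IsWeightedHomogeneous.weightedHomogeneousComponent_ne _
      (Dw_homog K n (weightedHomogeneousComponent_isWeightedHomogeneous m' f))
      (fun hc => hm' (add_right_cancel hc).symm)) ] at h1
  rw [IsWeightedHomogeneous.weightedHomogeneousComponent_same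
    (Dw_homog K n (weightedHomogeneousComponent_isWeightedHomogeneous m f))] at h1
  exact h1

lemma sl2_vanish {f : MvPolynomial (Fin (n + 1)) K} {d v : ℤ}
    (hf : IsWeightedHomogeneous (ww n) f (d, v)) (hD : Dw K n f = 0)
    (hlt : (n : ℤ) * d < 2 * v) : f = 0 := by
  set ℓ : ℤ := (n : ℤ) * d - 2 * v with hl
  have hlneg : ℓ < 0 := by omega
  set Ek : ℕ → MvPolynomial (Fin (n + 1)) K := fun k => (fun p => Ew K n p)^[k] f with hEk
  have hsucc : ∀ k, Ek (k + 1) = Ew K n (Ek k) := fun k =>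
    Function.iterate_succ_apply' _ _ _
  have hhom : ∀ k, IsWeightedHomogeneous (ww n) (Ek k) (d, v + k) := by
    intro k
    induction k with
    | zero => simpa using (show IsWeightedHomogeneous (ww n) (Ek 0) (d, v) from hf)
    | succ k ih =>
        rw [hsucc k]
        have := Ew_homog K n ih
        have e : ((d, v + (k : ℤ)) : ℤ × ℤ) + (0, 1) = (d, v + ((k + 1 : ℕ) : ℤ)) := by
          simp only [Prod.mk_add_mk, Prod.mk.injEq]
          constructor
          · ring
          · push_cast; ring
        rwa [e] at this
  have hDk : ∀ k, Dw K n (Ek (k + 1))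
      = ((((k : ℤ) + 1) * (ℓ - k) : ℤ) : K) • Ek k := by
    intro k
    induction k with
    | zero =>
        rw [hsucc 0]
        have hb := congrArg (fun D => D (Ek 0)) (DE_bracket K n)
        simp only [Derivation.commutator_apply] at hb
        have h0 : Dw K n (Ek 0) = 0 := hD
        rw [h0, map_zero, sub_zero] at hb
        rw [hb, Hw_eigen K n (f := Ek 0) (by exact hf)]
        congr 1
        rw [hl]
        push_cast
        ring
    | succ k ih =>
        rw [hsucc (k + 1)]
        have hb := congrArg (fun D => D (Ek (k + 1))) (DE_bracket K n)
        simp only [Derivation.commutator_apply] at hb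
        have : Dw K n (Ew K n (Ek (k + 1)))
            = Ew K n (Dw K n (Ek (k + 1))) + Hw K n (Ek (k + 1)) := by
          rw [← hb]; abel
        rw [this, ih, Derivation.map_smul, Hw_eigen K n (hhom (k + 1)), ← hsucc k,
          ← add_smul]
        congr 1
        rw [hl]
        push_cast
        ring
  have hvan : ∀ k, Ek k = 0 → f = 0 := by
    intro k
    induction k with
    | zero => exact fun h => h
    | succ k ih =>
        intro h
        have := hDk k
        rw [h, map_zero] at this
        have hc : ((((k : ℤ) + 1) * (ℓ - k) : ℤ) : K) ≠ 0 := by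
          rw [Int.cast_ne_zero]
          have h1 : (0 : ℤ) < (k : ℤ) + 1 := by positivity
          have h2 : (ℓ - (k : ℤ)) < 0 := by omega
          exact mul_ne_zero (by omega) (by omega)
        exact ih ((smul_eq_zero.mp this.symm).resolve_left hc)
  have hk0 : Ek (((n : ℤ) * d - v).toNat + 1) = 0 := by
    refine homog_zero K n (hhom _) ?_
    have := Int.self_le_toNat ((n : ℤ) * d - v)
    push_cast
    omega
  exact hvan _ hk0

lemma key_kill {f : MvPolynomial (Fin (n + 1)) K} (hn : 1 ≤ n) (hfker : Dw K n f = 0)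
    (u : Fin (n + 1) →₀ ℕ) (hune : u ≠ 0) :
    piHom K (n - n / 2 - 1) n (monomial u (coeff u f)) = 0 := by
  classical
  set k := n - (n - n / 2 - 1) with hkdef
  have hk : k = n / 2 + 1 := by omega
  by_cases hex : ∃ i ∈ u.support, i.1 < k
  · obtain ⟨i, hi, hlt⟩ := hex
    rw [piHom, aeval_monomial, Finsupp.prod]
    rw [Finset.prod_eq_zero hi (by
      rw [if_pos hlt, zero_pow (Finsupp.mem_support_iff.mp hi)])]
    rw [mul_zero]
  · push_neg at hex
    have hcoeff : coeff u f = 0 := by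
      set g := weightedHomogeneousComponent (ww n) (Finsupp.weight (ww n) u) f with hg
      have hhomg : IsWeightedHomogeneous (ww n) g
          ((Finsupp.weight (ww n) u).1, (Finsupp.weight (ww n) u).2) := by
        rw [Prod.mk.eta]
        exact weightedHomogeneousComponent_isWeightedHomogeneous _ f
      set dd := (Finsupp.weight (ww n) u).1 with hdd
      set vv := (Finsupp.weight (ww n) u).2 with hvv
      have h1 : (∑ i ∈ u.support, (u i : ℤ)) = dd := (weight_fst n u).symm
      have h2 : (∑ i ∈ u.support, (u i : ℤ) * (i.1 : ℤ)) = vv := (weight_snd n u).symm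
      have hsupp : u.support.Nonempty := Finsupp.support_nonempty_iff.mpr hune
      obtain ⟨i0, hi0⟩ := hsupp
      have hd1 : 1 ≤ dd := by
        rw [← h1]
        calc (1 : ℤ) ≤ (u i0 : ℤ) := by
              exact_mod_cast Nat.one_le_iff_ne_zero.mpr (Finsupp.mem_support_iff.mp hi0)
          _ ≤ ∑ i ∈ u.support, (u i : ℤ) :=
              Finset.single_le_sum (f := fun i : Fin (n + 1) => (u i : ℤ))
                (fun i _ => by positivity) hi0
      have hv : ((n / 2 : ℕ) + 1 : ℤ) * dd ≤ vv := by
        rw [← h1, ← h2, Finset.mul_sum]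
        refine Finset.sum_le_sum fun i hi => ?_
        have hik : ((n / 2 : ℕ) + 1 : ℤ) ≤ (i.1 : ℤ) := by
          have := hex i hi
          rw [hk] at this
          exact_mod_cast this
        calc ((n / 2 : ℕ) + 1 : ℤ) * (u i : ℤ) = (u i : ℤ) * ((n / 2 : ℕ) + 1 : ℤ) :=
              mul_comm _ _
          _ ≤ (u i : ℤ) * (i.1 : ℤ) := mul_le_mul_of_nonneg_left hik (by positivity)
      have hn2 : (n : ℤ) ≤ 2 * ((n / 2 : ℕ) : ℤ) + 1 := by
        have : n ≤ 2 * (n / 2) + 1 := by omega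
        exact_mod_cast this
      have hlt2 : (n : ℤ) * dd < 2 * vv := by nlinarith
      have hg0 : g = 0 :=
        sl2_vanish K n hhomg (comp_ker K n hfker _) hlt2
      have : coeff u f = coeff u g := by
        rw [hg, coeff_weightedHomogeneousComponent, if_pos rfl]
      rw [this, hg0, coeff_zero]
    rw [hcoeff, map_zero, map_zero]

end

theorem stmt6 (K : Type) [Field K] [CharZero K] (n : ℕ) (hn : 1 ≤ n) :
    ⇑(piHom K (n - n / 2 - 1) n) '' {f : MvPolynomial (Fin (n + 1)) K | Dw K n f = 0}
      = Set.range (MvPolynomial.C :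
          K → MvPolynomial (Fin (n - n / 2 - 1 + 1)) K) := by
  classical
  apply Set.Subset.antisymm
  · rintro g ⟨f, hfker, rfl⟩
    refine ⟨coeff 0 f, ?_⟩
    have hsum : piHom K (n - n / 2 - 1) n f
        = ∑ u ∈ f.support, piHom K (n - n / 2 - 1) n (monomial u (coeff u f)) := by
      rw [← map_sum]
      exact congrArg _ (support_sum_monomial_coeff f).symm
    rw [hsum, Finset.sum_eq_single (0 : Fin (n + 1) →₀ ℕ)
      (fun u _ hu => key_kill K n hn hfker u hu)
      (fun h0 => by
        rw [MvPolynomial.notMem_support_iff.mp h0, map_zero, map_zero])]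
    by_cases h0 : (0 : Fin (n + 1) →₀ ℕ) ∈ f.support
    · rw [monomial_zero', piHom, aeval_C, algebraMap_eq]
    · rw [monomial_zero', piHom, aeval_C, algebraMap_eq]
  · rintro g ⟨c, rfl⟩
    refine ⟨C c, ?_, ?_⟩
    · exact derivation_C _ c
    · rw [piHom, aeval_C, algebraMap_eq]
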